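/- Fix an integer p ≥ 2 and integers D, K ≥ 1, and let 𝕋 = (ℝ/ℤ)^K with quotient metric d and Haar probability measure λ. Then for λ^D-almost every (a₁,…,a_D) ∈ 𝕋^D the associated rotation system is minimal along powers of p: for all targets t₁,…,t_D ∈ 𝕋 and every ε > 0 there exists m ∈ ℕ such that d(p^m·a_d, t_d) < ε for every d ∈ {1,…,D}, where p^m·a_d denotes the p^m-fold sum of a_d in the group 𝕋. -/

import Mathlib

open MeasureTheory Filter Topology
open scoped ENNReal

noncomputable section

/-- The `K`-dimensional torus `𝕋 = (ℝ/ℤ)^K`, with its (sup) quotient metric `d`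
and Haar (Lebesgue) probability measure `volume`. -/
abbrev Torus (K : ℕ) := Fin K → AddCircle (1 : ℝ)

/-- The lattice `𝕃 = ℤ^D`. -/
abbrev Zd (D : ℕ) := Fin D → ℤ

/-- The box `𝔹(N) = {-N,…,N-1}^D ⊆ ℤ^D`. -/
def box (D N : ℕ) : Finset (Zd D) :=
  Fintype.piFinset fun _ => Finset.Ico (-(N : ℤ)) (N : ℤ)

open Classical in
/-- `#(J ∩ 𝔹(N)) / (2N)^D`. -/
def densSeq (D : ℕ) (J : Set (Zd D)) (N : ℕ) : ℝ :=
  ((box D N).filter (fun ℓ => ℓ ∈ J)).card / ((2 * N : ℕ) : ℝ) ^ D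

/-- The upper Cesàro density `d̄(J)` of `J ⊆ ℤ^D`. -/
def upperDens (D : ℕ) (J : Set (Zd D)) : ℝ :=
  Filter.limsup (densSeq D J) Filter.atTop

/-- The Besicovitch pseudometric `d_B` on `𝒜^{ℤ^D}`. -/
def dB {A : Type*} (D : ℕ) (p q : Zd D → A) : ℝ :=
  upperDens D {ℓ | p ℓ ≠ q ℓ}

variable {K D : ℕ} {A : Type*}

/-- An `𝒜`-labelled measurable partition of the torus: pairwise disjoint measurable
cells whose union has full measure. -/
structure IsMeasPartition (P : A → Set (Torus K)) : Prop where
  meas : ∀ a, MeasurableSet (P a)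
  disj : Pairwise (Function.onFun Disjoint P)
  full : volume (⋃ a, P a) = 1

/-- An `𝒜`-labelled open partition of the torus: pairwise disjoint open cells whose
union is dense and has full measure. -/
structure IsOpenPartition (P : A → Set (Torus K)) : Prop where
  isOpen : ∀ a, IsOpen (P a)
  disj : Pairwise (Function.onFun Disjoint P)
  dense : Dense (⋃ a, P a)
  full : volume (⋃ a, P a) = 1

/-- `lab` realizes the partition `P` as an `𝒜`-valued function (each cell is labelled
by its index). -/
def IsLabel (P : A → Set (Torus K)) (lab : Torus K → A) : Prop :=
  ∀ a, ∀ t ∈ P a, lab t = a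

/-- The symmetric-difference pseudometric `d_△(𝒫,𝒬) = Σ_a λ(P_a △ Q_a)`. -/
def dSym [Fintype A] (P Q : A → Set (Torus K)) : ℝ :=
  ∑ a, (volume (symmDiff (P a) (Q a))).toReal

/-- `𝕋̃(𝒫) = ⋂_ℓ σ^ℓ(P_*)`, where `σ^ℓ(t) = t + τ(ℓ)` and `P_* = ⋃_a P_a`. -/
def Ttil (τ : Zd D →+ Torus K) (P : A → Set (Torus K)) : Set (Torus K) :=
  ⋂ ℓ : Zd D, (fun x => x + τ ℓ) '' (⋃ a, P a)

/-- The trajectory map `𝒫_σ(t)_ℓ = 𝒫(σ^ℓ t)`, expressed via a labelling `lab` of `𝒫`. -/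
def traj (τ : Zd D →+ Torus K) (lab : Torus K → A) (t : Torus K) : Zd D → A :=
  fun ℓ => lab (t + τ ℓ)

/-- A partition is simple if `0` is its only translational symmetry. -/
def IsSimple (P : A → Set (Torus K)) : Prop :=
  ∀ s : Torus K, (∀ a, volume (symmDiff (P a) ((fun x => x + s) '' P a)) = 0) → s = 0

/-- The cellular automaton `Φ` with neighbourhood `B` and local rule `φ`:
`Φ(x)_ℓ = φ((x_{ℓ+b})_{b∈B})`. -/
def caMap {D : ℕ} {A : Type*} (B : Finset (Zd D)) (φ : (B → A) → A)
    (x : Zd D → A) : Zd D → A :=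
  fun ℓ => φ fun b => x (ℓ + (b : Zd D))

/-- The induced map `Φ̂` on partitions: `Q_a = ⋃_{c : φ(c)=a} ⋂_{b∈B} σ^{-b}(P_{c_b})`. -/
def inducedPart (τ : Zd D →+ Torus K) (B : Finset (Zd D)) (φ : (B → A) → A)
    (P : A → Set (Torus K)) : A → Set (Torus K) :=
  fun a => ⋃ (c : B → A) (_ : φ c = a), ⋂ b : B, {t | t + τ (b : Zd D) ∈ P (c b)}

/-- `x ∈ QS_σ`: `x` is a `σ`-quasisturmian sequence, i.e. the `𝒫`-trajectory of some
point of `𝕋̃(𝒫)` for some open partition `𝒫`. -/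
def IsQSSeq (τ : Zd D →+ Torus K) (x : Zd D → A) : Prop :=
  ∃ (P : A → Set (Torus K)) (lab : Torus K → A) (t : Torus K),
    IsOpenPartition P ∧ IsLabel P lab ∧ t ∈ Ttil τ P ∧ x = traj τ lab t


/- ===== Auxiliary development for Statement 18 ===== -/

open Metric MeasureTheory.Measure Pointwise in
instance : IsProbabilityMeasure (volume : Measure (AddCircle (1:ℝ))) :=
  ⟨by simp [AddCircle.measure_univ]⟩

open Metric Pointwise in
private lemma addCircle_sep {q : ℕ} (hq : 0 < q) (a b : Fin q) (h : a ≠ b) :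
    (1:ℝ)/q ≤ dist ((((a:ℕ):ℝ)/q : ℝ) : AddCircle (1:ℝ)) ((((b:ℕ):ℝ)/q : ℝ) : AddCircle (1:ℝ)) := by
  have hq' : (0:ℝ) < q := by exact_mod_cast hq
  rw [dist_eq_norm]
  have hsub : ((((a:ℕ):ℝ)/q : ℝ) : AddCircle (1:ℝ)) - ((((b:ℕ):ℝ)/q : ℝ) : AddCircle (1:ℝ))
      = ((((a:ℕ):ℝ)/q - ((b:ℕ):ℝ)/q : ℝ) : AddCircle (1:ℝ)) := rfl
  rw [hsub]
  set x : ℝ := ((a:ℕ):ℝ)/q - ((b:ℕ):ℝ)/q with hx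
  have hxz : x = (((a:ℤ) - (b:ℤ) : ℤ) : ℝ) / q := by push_cast [hx]; ring
  rw [AddCircle.norm_eq]
  simp only [inv_one, one_mul, mul_one]
  set z : ℤ := (a:ℤ) - (b:ℤ) with hz
  set r : ℤ := round x with hr
  have hzne : z ≠ 0 := sub_ne_zero.mpr (by exact_mod_cast Fin.val_ne_of_ne h)
  have hzlt : |z| < q := by
    rw [abs_sub_lt_iff]
    constructor <;> [skip; skip] <;>
      · have := a.isLt; have := b.isLt; omega
  have hm : z - q * r ≠ 0 := by
    intro h0
    have hzr : z = q * r := by omega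
    rcases eq_or_ne r 0 with h1 | h1
    · simp [h1] at hzr; exact hzne hzr
    · have : (q:ℤ) ≤ |z| := by
        rw [hzr, abs_mul, abs_of_nonneg (by positivity : (0:ℤ) ≤ (q:ℤ))]
        nlinarith [Int.one_le_abs h1]
      omega
  have key : |x - (r:ℝ)| = |((z - q * r : ℤ) : ℝ)| / q := by
    rw [hxz, ← abs_of_pos hq', ← abs_div]
    congr 1
    push_cast
    field_simp
    rw [abs_of_pos hq']; ring
  rw [key]
  have : (1:ℝ) ≤ |((z - q * r : ℤ) : ℝ)| := by
    exact_mod_cast Int.one_le_abs hm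
  exact div_le_div_of_nonneg_right this hq'.le |>.trans_eq rfl

open Metric Pointwise in
private lemma torus_volume_closedBall (x : Fin D → Torus K) {ε : ℝ} (hε : 0 ≤ ε) :
    volume (Metric.closedBall x ε) = ENNReal.ofReal (min 1 (2*ε)) ^ (D * K) := by
  rw [closedBall_pi _ hε, MeasureTheory.volume_pi_pi]
  have h1 : ∀ d : Fin D, volume (Metric.closedBall (x d) ε)
      = ENNReal.ofReal (min 1 (2*ε)) ^ K := by
    intro d
    rw [closedBall_pi _ hε, MeasureTheory.volume_pi_pi]
    simp [AddCircle.volume_closedBall]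
  simp [h1, ← pow_mul, mul_comm K D]

open Metric Pointwise in
instance : IsUnifLocDoublingMeasure (volume : Measure (Fin D → Torus K)) := by
  refine ⟨⟨2 ^ (D*K), ?_⟩⟩
  filter_upwards [self_mem_nhdsWithin] with ε hε
  have hε0 : (0:ℝ) < ε := hε
  intro x
  rw [torus_volume_closedBall x (by positivity), torus_volume_closedBall x hε0.le]
  have h2 : ENNReal.ofReal (min 1 (2*(2*ε))) ≤ 2 * ENNReal.ofReal (min 1 (2*ε)) := by
    rw [← ENNReal.ofReal_ofNat, ← ENNReal.ofReal_mul (by norm_num)]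
    apply ENNReal.ofReal_le_ofReal
    rw [mul_min_of_nonneg _ _ (by norm_num : (0:ℝ) ≤ 2)]
    exact min_le_min (by norm_num) (by linarith)
  refine le_trans (pow_le_pow_left' h2 (D*K)) ?_
  rw [mul_pow]
  gcongr
  · exact le_refl _
  all_goals norm_cast

open Metric MeasureTheory.Measure Pointwise in
private lemma torus_count {p : ℕ} (hp : 2 ≤ p) (j : ℕ) {s : Set (Fin D → Torus K)}
    (hms : MeasurableSet s)
    (hinv : ∀ u : Fin D → Torus K, ((p:ℤ)^j) • u = 0 → u +ᵥ s = s)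
    (d : Fin D → Torus K) {δ : ℝ} (hδ : 0 < δ) (hδ' : 2*δ < 1/((p^j : ℕ) : ℝ)) :
    ((p^j : ℕ) : ℝ≥0∞) ^ (D*K) * volume (s ∩ Metric.closedBall d δ) ≤ volume s := by
  set q : ℕ := p^j with hqdef
  have hq : 0 < q := Nat.pow_pos (by omega)
  have hq' : (0:ℝ) < q := by exact_mod_cast hq
  set C := Fin D → Fin K → Fin q with hC
  set g : C → (Fin D → Torus K) := fun c d' k => ((((c d' k : ℕ) : ℝ)/q : ℝ) : AddCircle (1:ℝ))
    with hg
  have hg0 : ∀ c : C, ((p:ℤ)^j) • g c = 0 := by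
    intro c
    funext d' k
    have hpq : ((p:ℤ))^j = (q:ℤ) := by rw [hqdef]; push_cast; ring
    have h1 : ((p:ℤ)^j) • g c d' k = (((q:ℤ) • (((c d' k : ℕ) : ℝ)/q) : ℝ) : AddCircle (1:ℝ)) := by
      rw [hpq, AddCircle.coe_zsmul]
    show ((p:ℤ)^j) • g c d' k = (0 : AddCircle (1:ℝ))
    rw [h1]
    have h2 : ((q:ℤ) • (((c d' k : ℕ) : ℝ)/q) : ℝ) = ((c d' k : ℕ) : ℝ) := by
      rw [zsmul_eq_mul]
      push_cast
      field_simp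
    rw [h2, AddCircle.coe_eq_zero_iff]
    exact ⟨(c d' k : ℕ), by simp⟩
  have hdisj : Pairwise (Function.onFun Disjoint
      (fun c : C => g c +ᵥ (s ∩ Metric.closedBall d δ))) := by
    intro c c' hcc'
    rw [Function.onFun]
    rw [Set.disjoint_left]
    rintro z hz hz'
    obtain ⟨y, ⟨-, hy2⟩, rfl⟩ := hz
    obtain ⟨y', ⟨-, hy2'⟩, hyy'⟩ := hz'
    obtain ⟨d0, hd0⟩ := Function.ne_iff.mp hcc'
    obtain ⟨k0, hk0⟩ := Function.ne_iff.mp hd0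
    have hda : dist (g c d0 k0) (g c' d0 k0) ≤ 2*δ := by
      have e1 : dist (y d0 k0) (d d0 k0) ≤ δ :=
        le_trans (dist_le_pi_dist _ _ k0) (le_trans (dist_le_pi_dist y d d0) hy2)
      have e1' : dist (y' d0 k0) (d d0 k0) ≤ δ :=
        le_trans (dist_le_pi_dist _ _ k0) (le_trans (dist_le_pi_dist y' d d0) hy2')
      have e2 : g c d0 k0 + y d0 k0 = g c' d0 k0 + y' d0 k0 := by
        have := congrFun (congrFun hyy' d0) k0
        exact this.symm
      have e3 : dist (g c d0 k0) (g c' d0 k0) = dist (y' d0 k0) (y d0 k0) := by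
        rw [dist_eq_norm, dist_eq_norm]
        congr 1
        have : g c d0 k0 - g c' d0 k0 = y' d0 k0 - y d0 k0 := by
          have := e2
          abel_nf
          linear_combination (norm := abel1) e2
        rw [this]
      rw [e3]
      calc dist (y' d0 k0) (y d0 k0) ≤ dist (y' d0 k0) (d d0 k0) + dist (d d0 k0) (y d0 k0) :=
            dist_triangle _ _ _
        _ ≤ δ + δ := add_le_add e1' (dist_comm (d d0 k0) (y d0 k0) ▸ e1)
        _ = 2*δ := by ring
    have hsep := addCircle_sep hq (c d0 k0) (c' d0 k0) hk0
    have : (1:ℝ)/q ≤ 2*δ := le_trans hsep hda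
    linarith
  have hmeas : ∀ c : C, MeasurableSet (g c +ᵥ (s ∩ Metric.closedBall d δ)) := by
    intro c
    exact (hms.inter measurableSet_closedBall).const_vadd (g c)
  have hsub : ∀ c : C, g c +ᵥ (s ∩ Metric.closedBall d δ) ⊆ s := by
    intro c
    refine le_trans (Set.vadd_set_mono Set.inter_subset_left) ?_
    rw [hinv (g c) (hg0 c)]
  have hvol : ∀ c : C, volume (g c +ᵥ (s ∩ Metric.closedBall d δ))
      = volume (s ∩ Metric.closedBall d δ) := fun c => measure_vadd _ _ _
  have hcard : (Fintype.card C : ℝ≥0∞) = ((q:ℕ) : ℝ≥0∞) ^ (D*K) := by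
    simp [hC, Fintype.card_fun]
    push_cast
    rw [← pow_mul, mul_comm K D]
  calc ((q : ℕ) : ℝ≥0∞) ^ (D*K) * volume (s ∩ Metric.closedBall d δ)
      = ∑ c : C, volume (g c +ᵥ (s ∩ Metric.closedBall d δ)) := by
        simp only [hvol]
        rw [Finset.sum_const, Finset.card_univ, nsmul_eq_mul, hcard]
    _ = volume (⋃ c : C, g c +ᵥ (s ∩ Metric.closedBall d δ)) := by
        rw [measure_iUnion hdisj hmeas, tsum_fintype]
    _ ≤ volume s := measure_mono (Set.iUnion_subset hsub)

open Metric MeasureTheory.Measure Pointwise in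
private lemma torus_zero_or_one {p : ℕ} (hp : 2 ≤ p) {s : Set (Fin D → Torus K)}
    (hms : MeasurableSet s)
    (hinv : (fun y : Fin D → Torus K => (p:ℤ) • y) ⁻¹' s = s) :
    volume s = 0 ∨ volume s = 1 := by
  set μ := (volume : Measure (Fin D → Torus K)) with hμ
  rcases eq_or_ne (μ s) 0 with h | h
  · exact Or.inl h
  right
  have hp1 : (1:ℝ) < p := by exact_mod_cast by omega
  have hinvj : ∀ (j : ℕ) (u : Fin D → Torus K), ((p:ℤ)^j) • u = 0 → u +ᵥ s = s := by
    intro j u hu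
    exact vadd_eq_self_of_preimage_zsmul_eq_self hinv hu
  obtain ⟨d, -, hd⟩ : ∃ d, d ∈ s ∧ ∀ {ι'} {l : Filter ι'} (w : ι' → (Fin D → Torus K)) (δ : ι' → ℝ),
      Tendsto δ l (𝓝[>] 0) → (∀ᶠ j in l, d ∈ closedBall (w j) (1 * δ j)) →
        Tendsto (fun j => μ (s ∩ closedBall (w j) (δ j)) / μ (closedBall (w j) (δ j))) l (𝓝 1) :=
    exists_mem_of_measure_ne_zero_of_ae h
      (IsUnifLocDoublingMeasure.ae_tendsto_measure_inter_div μ s 1)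
  set θ : ℕ → ℝ := fun j => 1 - (2⁻¹:ℝ)^(j+1) with hθ
  have hθ0 : ∀ j, 0 < θ j := by
    intro j
    have : (2⁻¹:ℝ)^(j+1) ≤ (2⁻¹:ℝ)^1 := by
      apply pow_le_pow_of_le_one (by norm_num) (by norm_num); omega
    simp only [hθ]; simp at this ⊢; nlinarith
  have hθ1 : ∀ j, θ j < 1 := by
    intro j
    have : (0:ℝ) < (2⁻¹:ℝ)^(j+1) := by positivity
    simp only [hθ]; linarith
  have hθlim : Tendsto θ atTop (𝓝 1) := by
    have h2 : Tendsto (fun j : ℕ => (2⁻¹:ℝ)^(j+1)) atTop (𝓝 0) := by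
      have := (tendsto_pow_atTop_nhds_zero_of_lt_one (by norm_num : (0:ℝ) ≤ 2⁻¹)
        (by norm_num : (2⁻¹:ℝ) < 1)).comp (tendsto_add_atTop_nat 1)
      exact this
    have h3 := tendsto_const_nhds (x := (1:ℝ)) (f := atTop (α := ℕ)) |>.sub h2
    rw [sub_zero] at h3
    exact h3
  set δ : ℕ → ℝ := fun j => θ j / (2 * (p:ℝ)^j) with hδdef
  have hppos : ∀ j : ℕ, (0:ℝ) < (p:ℝ)^j := fun j => by positivity
  have hδ0 : ∀ j, 0 < δ j := fun j => div_pos (hθ0 j) (by positivity)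
  have hδlim : Tendsto δ atTop (𝓝[>] 0) := by
    rw [tendsto_nhdsWithin_iff]
    constructor
    · have hub : ∀ j, δ j ≤ ((p:ℝ)⁻¹)^j := by
        intro j
        show θ j / (2 * (p:ℝ)^j) ≤ ((p:ℝ)⁻¹)^j
        rw [inv_pow, ← one_div, div_le_div_iff₀ (by positivity) (hppos j)]
        nlinarith [hθ1 j, hθ0 j, hppos j]
      apply squeeze_zero (fun j => (hδ0 j).le) hub
      exact tendsto_pow_atTop_nhds_zero_of_lt_one (by positivity)
        (inv_lt_one_of_one_lt₀ hp1)
    · exact Filter.Eventually.of_forall fun j => hδ0 j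
  have hratio : Tendsto
      (fun j => μ (s ∩ closedBall d (δ j)) / μ (closedBall d (δ j))) atTop (𝓝 1) := by
    apply hd (fun _ => d) δ hδlim
    exact Filter.Eventually.of_forall fun j =>
      Metric.mem_closedBall_self (by nlinarith [hδ0 j])
  set n := D * K with hn
  set A : ℕ → ℝ≥0∞ := fun j => ENNReal.ofReal (θ j) ^ n with hA
  have h2δ : ∀ j, 2 * δ j = θ j / (p:ℝ)^j := by
    intro j
    rw [hδdef]
    field_simp
  have hA0 : ∀ j, A j ≠ 0 := by
    intro j
    simp only [hA]
    exact pow_ne_zero _ (ENNReal.ofReal_pos.mpr (hθ0 j)).ne'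
  have hQA : ∀ j, ((p^j : ℕ) : ℝ≥0∞) ^ n * μ (closedBall d (δ j)) = A j := by
    intro j
    rw [show μ (closedBall d (δ j)) = ENNReal.ofReal (min 1 (2 * δ j)) ^ n from
      torus_volume_closedBall d (hδ0 j).le]
    have hmin : min 1 (2 * δ j) = θ j / (p:ℝ)^j := by
      rw [h2δ j, min_eq_right]
      rw [div_le_one (hppos j)]
      have : (1:ℝ) ≤ (p:ℝ)^j := one_le_pow₀ (by exact_mod_cast (by omega : 1 ≤ p))
      nlinarith [hθ1 j]
    rw [hmin]
    have hcast : ((p^j : ℕ) : ℝ≥0∞) = ENNReal.ofReal ((p:ℝ)^j) := by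
      rw [← ENNReal.ofReal_natCast]
      congr 1
      push_cast
      ring
    rw [hcast, ← mul_pow, ← ENNReal.ofReal_mul (by positivity), hA]
    congr 2
    field_simp
  have hbound : ∀ j, μ (s ∩ closedBall d (δ j)) / μ (closedBall d (δ j)) ≤ μ s * (A j)⁻¹ := by
    intro j
    have hcount : ((p^j : ℕ) : ℝ≥0∞) ^ n * μ (s ∩ closedBall d (δ j)) ≤ μ s := by
      apply torus_count hp j hms (hinvj j) d (hδ0 j)
      rw [h2δ j, div_lt_div_iff₀ (hppos j) (by exact_mod_cast Nat.pow_pos (by omega))]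
      have : ((p^j : ℕ) : ℝ) = (p:ℝ)^j := by push_cast; ring
      rw [this]
      nlinarith [hθ1 j, hppos j]
    have hQn0 : ((p^j : ℕ) : ℝ≥0∞) ^ n ≠ 0 := by
      apply pow_ne_zero
      simp only [ne_eq, Nat.cast_eq_zero]
      positivity
    have hQnt : ((p^j : ℕ) : ℝ≥0∞) ^ n ≠ ⊤ := by
      exact ENNReal.pow_ne_top (ENNReal.natCast_ne_top _)
    have hcb0 : μ (closedBall d (δ j)) ≠ 0 :=
      (measure_closedBall_pos μ d (hδ0 j)).ne'
    have hcbt : μ (closedBall d (δ j)) ≠ ⊤ := measure_ne_top _ _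
    rw [ENNReal.div_le_iff hcb0 hcbt]
    rw [← hQA j] at *
    calc μ (s ∩ closedBall d (δ j))
        ≤ μ s / (((p^j : ℕ) : ℝ≥0∞) ^ n) := by
          rw [ENNReal.le_div_iff_mul_le (Or.inl hQn0) (Or.inl hQnt), mul_comm]
          exact hcount
      _ = μ s * (((p^j : ℕ) : ℝ≥0∞) ^ n)⁻¹ := by rw [ENNReal.div_eq_inv_mul, mul_comm]
      _ = μ s * ((((p^j : ℕ) : ℝ≥0∞) ^ n * μ (closedBall d (δ j)))⁻¹
            * μ (closedBall d (δ j))) := by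
          rw [ENNReal.mul_inv (Or.inl hQn0) (Or.inr hcb0)]
          rw [mul_assoc, ENNReal.inv_mul_cancel hcb0 hcbt, mul_one]
      _ = μ s * ((((p^j : ℕ) : ℝ≥0∞) ^ n * μ (closedBall d (δ j)))⁻¹)
            * μ (closedBall d (δ j)) := by ring
  have hAlim : Tendsto A atTop (𝓝 1) := by
    have h1 : Tendsto (fun j => ENNReal.ofReal (θ j)) atTop (𝓝 1) := by
      have := ENNReal.tendsto_ofReal hθlim
      simpa using this
    have := ENNReal.Tendsto.pow (n := n) h1
    simpa using this
  have hlim2 : Tendsto (fun j => μ s * (A j)⁻¹) atTop (𝓝 (μ s)) := by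
    have hinvlim : Tendsto (fun j => (A j)⁻¹) atTop (𝓝 1) := by
      have := ENNReal.tendsto_inv_iff.mpr hAlim
      simpa using this
    have := ENNReal.Tendsto.const_mul (a := μ s) hinvlim (Or.inl one_ne_zero)
    simpa using this
  have h1le : (1:ℝ≥0∞) ≤ μ s := le_of_tendsto_of_tendsto' hratio hlim2 hbound
  exact le_antisymm prob_le_one h1le

open Metric MeasureTheory.Measure Pointwise in
private lemma torus_measurePreserving {p : ℕ} (hp : 2 ≤ p) :
    MeasurePreserving (fun y : Fin D → Torus K => (p:ℤ) • y) volume volume := by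
  have habs : (1:ℤ) < |(p:ℤ)| := by
    rw [abs_of_nonneg (by positivity)]
    exact_mod_cast by omega
  have h1 : MeasurePreserving (fun y : AddCircle (1:ℝ) => (p:ℤ) • y) volume volume :=
    (AddCircle.ergodic_zsmul habs).toMeasurePreserving
  have h2' : MeasurePreserving (fun (y : Torus K) (k : Fin K) => (p:ℤ) • (y k))
      volume volume :=
    MeasureTheory.volume_preserving_pi (fun _ : Fin K => h1)
  have h2 : MeasurePreserving (fun y : Torus K => (p:ℤ) • y) volume volume := h2'
  have h3' : MeasurePreserving
      (fun (y : Fin D → Torus K) (d : Fin D) => (p:ℤ) • (y d)) volume volume :=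
    MeasureTheory.volume_preserving_pi (fun _ : Fin D => h2)
  exact h3'

open Metric MeasureTheory.Measure Pointwise in
private lemma torus_bad_zero {p : ℕ} (hp : 2 ≤ p) (c : Fin D → Torus K) {r : ℝ} (hr : 0 < r) :
    volume {a : Fin D → Torus K |
      ∀ m : ℕ, (fun y : Fin D → Torus K => (p:ℤ) • y)^[m] a ∉ Metric.ball c r} = 0 := by
  set T : (Fin D → Torus K) → (Fin D → Torus K) := fun y => (p:ℤ) • y with hT
  set B := Metric.ball c r with hB
  set W := {a : Fin D → Torus K | ∀ m : ℕ, T^[m] a ∉ B} with hW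
  have hTcont : Continuous T := continuous_zsmul (p:ℤ)
  have hWclosed : IsClosed W := by
    have h0 : W = ⋂ m : ℕ, (T^[m]) ⁻¹' Bᶜ := by
      ext a
      simp [hW, Set.mem_iInter]
    rw [h0]
    exact isClosed_iInter fun m =>
      (isOpen_ball.isClosed_compl).preimage (hTcont.iterate m)
  have hWsub : W ⊆ T ⁻¹' W := by
    intro a ha m
    rw [← Function.iterate_succ_apply]
    exact ha (m+1)
  have hstep : ∀ i : ℕ, (T^[i]) ⁻¹' W ⊆ (T^[i+1]) ⁻¹' W := by
    intro i
    rw [Function.iterate_succ', Set.preimage_comp]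
    exact Set.preimage_mono hWsub
  have hmono : Monotone (fun i : ℕ => (T^[i]) ⁻¹' W) := monotone_nat_of_le_succ hstep
  set Wt := ⋃ i : ℕ, (T^[i]) ⁻¹' W with hWt
  have h4 : ∀ i : ℕ, T ⁻¹' ((T^[i]) ⁻¹' W) = (T^[i+1]) ⁻¹' W := by
    intro i
    rw [Function.iterate_succ, Set.preimage_comp]
  have hWtinv : T ⁻¹' Wt = Wt := by
    apply subset_antisymm
    · rw [hWt, Set.preimage_iUnion]
      apply Set.iUnion_subset
      intro i
      rw [h4 i]
      exact Set.subset_iUnion (fun i : ℕ => (T^[i]) ⁻¹' W) (i+1)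
    · rw [hWt, Set.preimage_iUnion]
      apply Set.iUnion_subset
      intro i
      refine (hstep i).trans ?_
      rw [← h4 i]
      exact Set.subset_iUnion (fun i' : ℕ => T ⁻¹' ((T^[i']) ⁻¹' W)) i
  have hWmeas : MeasurableSet W := hWclosed.measurableSet
  have hmp := torus_measurePreserving (D := D) (K := K) hp
  have hWtm : ∀ i : ℕ, MeasurableSet ((T^[i]) ⁻¹' W) := fun i =>
    hWmeas.preimage (hmp.iterate i).measurable
  have hμi : ∀ i : ℕ, volume ((T^[i]) ⁻¹' W) = volume W := fun i =>
    (hmp.iterate i).measure_preimage hWmeas.nullMeasurableSet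
  have hμWt : volume Wt = volume W := by
    rw [hWt, hmono.directed_le.measure_iUnion]
    simp [hμi]
  have hWWt : W ⊆ Wt := by
    have h5 : W = (T^[0]) ⁻¹' W := by simp
    rw [h5]
    exact Set.subset_iUnion (fun i : ℕ => (T^[i]) ⁻¹' W) 0
  rcases torus_zero_or_one hp (MeasurableSet.iUnion hWtm) hWtinv with h0 | h1
  · exact measure_mono_null hWWt h0
  · exfalso
    have hBpos : 0 < volume B := measure_ball_pos _ c hr
    have hWB : W ⊆ Bᶜ := fun a ha => by simpa using ha 0
    have hlt : volume W < 1 := by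
      calc volume W ≤ volume Bᶜ := measure_mono hWB
        _ = 1 - volume B := prob_compl_eq_one_sub isOpen_ball.measurableSet
        _ < 1 := ENNReal.sub_lt_self ENNReal.one_ne_top one_ne_zero hBpos.ne'
    rw [← hμWt, h1] at hlt
    exact lt_irrefl _ hlt

/-- For every integer `p ≥ 2`, for `λ^D`-almost every
`(a₁,…,a_D) ∈ 𝕋^D`, the rotation system is minimal along powers of `p`: every tuple of
targets can be simultaneously `ε`-approximated by `(p^m·a₁,…,p^m·a_D)`. -/
theorem minimal_along_powers {p D K : ℕ} (hp : 2 ≤ p) (hD : 1 ≤ D) (hK : 1 ≤ K) :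
    ∀ᵐ a ∂(volume : Measure (Fin D → Torus K)),
      ∀ t : Fin D → Torus K, ∀ ε : ℝ, 0 < ε →
        ∃ m : ℕ, ∀ d : Fin D, dist ((p ^ m : ℕ) • a d) (t d) < ε := by
  set T : (Fin D → Torus K) → (Fin D → Torus K) := fun y => (p:ℤ) • y with hT
  have hiter : ∀ (m : ℕ) (y : Fin D → Torus K), T^[m] y = ((p:ℤ)^m) • y := by
    intro m
    induction m with
    | zero => intro y; simp
    | succ m ih =>
      intro y
      rw [Function.iterate_succ_apply', ih y]
      show (p:ℤ) • ((p:ℤ)^m • y) = ((p:ℤ)^(m+1)) • y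
      rw [smul_smul, pow_succ, mul_comm]
  obtain ⟨Q, hQc, hQd⟩ := TopologicalSpace.exists_countable_dense (Fin D → Torus K)
  have hbad : ∀ c ∈ Q, ∀ k : ℕ, ∀ᵐ a ∂(volume : Measure (Fin D → Torus K)),
      ∃ m : ℕ, T^[m] a ∈ Metric.ball c (1/((k:ℝ)+1)) := by
    intro c _ k
    have h0 := torus_bad_zero hp c (r := 1/((k:ℝ)+1)) (by positivity)
    rw [MeasureTheory.ae_iff]
    refine measure_mono_null ?_ h0
    intro a ha
    simp only [Set.mem_setOf_eq, not_exists] at ha ⊢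
    exact ha
  have h1 : ∀ᵐ a ∂(volume : Measure (Fin D → Torus K)),
      ∀ c ∈ Q, ∀ k : ℕ, ∃ m : ℕ, T^[m] a ∈ Metric.ball c (1/((k:ℝ)+1)) := by
    rw [MeasureTheory.ae_ball_iff hQc]
    intro c hc
    rw [MeasureTheory.ae_all_iff]
    intro k
    exact hbad c hc k
  filter_upwards [h1] with a ha t ε hε
  obtain ⟨k, hk⟩ := exists_nat_one_div_lt (half_pos hε)
  have hr : (0:ℝ) < 1/((k:ℝ)+1) := by positivity
  obtain ⟨c, hcQ, hct⟩ : ∃ c ∈ Q, c ∈ Metric.ball t (1/((k:ℝ)+1)) := by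
    obtain ⟨c, hco, hcm⟩ := hQd.exists_mem_open Metric.isOpen_ball
      ⟨t, Metric.mem_ball_self hr⟩
    exact ⟨c, hco, hcm⟩
  obtain ⟨m, hm⟩ := ha c hcQ k
  refine ⟨m, fun d => ?_⟩
  have hdist : dist (T^[m] a) t < ε := by
    calc dist (T^[m] a) t ≤ dist (T^[m] a) c + dist c t := dist_triangle _ _ _
      _ < 1/((k:ℝ)+1) + 1/((k:ℝ)+1) :=
          add_lt_add (Metric.mem_ball.mp hm) (Metric.mem_ball.mp hct)
      _ < ε := by linarith
  have hcoord : dist ((T^[m] a) d) (t d) ≤ dist (T^[m] a) t := dist_le_pi_dist _ _ d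
  have hsm : (T^[m] a) d = (p ^ m : ℕ) • a d := by
    rw [hiter m a]
    show ((p:ℤ)^m • a) d = (p ^ m : ℕ) • a d
    have hz : ((p:ℤ)^m) = ((p^m : ℕ) : ℤ) := by push_cast; ring
    rw [hz]
    show ((p^m : ℕ) : ℤ) • a d = (p ^ m : ℕ) • a d
    exact natCast_zsmul _ _
  rw [← hsm]
  exact lt_of_le_of_lt hcoord hdist

end
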